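/- Let c : ℤ^d → ℤ be a configuration taking finitely many values, and let f be a nonzero integer Laurent polynomial annihilating c (i.e., the convolution f * c = 0). Then there exists a positive integer r such that for every positive integer n coprime to r, the polynomial f(X^n) (obtained by replacing exponent vectors v by nv) also annihilates c. -/

import Mathlib

open Finsupp

variable {G : Type*} [AddCommMonoid G]

noncomputable def convL {R : Type*} [CommRing R] (c : G → R) (w : G) :
    AddMonoidAlgebra R G →ₗ[R] R :=
  Finsupp.linearCombination R (fun v => c (w + v)) ∘ₗ
    (AddMonoidAlgebra.coeffLinearEquiv R).toLinearMap

lemma convL_single {R : Type*} [CommRing R] (c : G → R) (w v : G) (a : R) :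
    convL c w (AddMonoidAlgebra.single v a) = a * c (w + v) := by
  rw [convL]
  erw [LinearMap.comp_apply, Finsupp.linearCombination_single]
  rw [smul_eq_mul]

lemma convL_mul {R : Type*} [CommRing R] (c : G → R) (w : G) (g h : AddMonoidAlgebra R G) :
    convL c w (g * h) = g.coeff.sum fun v a => a * convL c (w + v) h := by
  rw [AddMonoidAlgebra.mul_def, map_finsuppSum]
  refine Finsupp.sum_congr fun v hv => ?_
  rw [map_finsuppSum]
  conv_rhs => rw [convL]; erw [LinearMap.comp_apply, Finsupp.linearCombination_apply]
  rw [Finsupp.mul_sum]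
  refine Finsupp.sum_congr fun u hu => ?_
  rw [convL_single, smul_eq_mul, ← add_assoc, mul_assoc]

lemma frob {p : ℕ} [hp : Fact p.Prime] (g : AddMonoidAlgebra (ZMod p) G) :
    g ^ p = AddMonoidAlgebra.mapDomain (p • ·) g := by
  haveI : CharP (AddMonoidAlgebra (ZMod p) G) p :=
    charP_of_injective_algebraMap
      (AddMonoidAlgebra.singleZeroRingHom (R := ZMod p) (M := G)).injective p
  induction g using AddMonoidAlgebra.induction with
  | zero => simp [zero_pow hp.out.ne_zero]
  | single_add v a s hvs ha ih =>
    rw [add_pow_char, ih, AddMonoidAlgebra.mapDomain_add]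
    congr 1
    erw [AddMonoidAlgebra.single_pow]
    rw [ZMod.pow_card, AddMonoidAlgebra.mapDomain_single]

lemma convL_apply {R : Type*} [CommRing R] (c : G → R) (w : G) (g : AddMonoidAlgebra R G) :
    convL c w g = g.coeff.sum fun v a => a * c (w + v) := by
  rw [convL]
  erw [LinearMap.comp_apply, Finsupp.linearCombination_apply]
  exact Finsupp.sum_congr fun v _ => smul_eq_mul _ _

lemma convL_mapDomain {R : Type*} [CommRing R] (c : G → R) (w : G) (σ : G → G)
    (g : G →₀ R) :
    convL c w (AddMonoidAlgebra.ofCoeff (Finsupp.mapDomain σ g)) = g.sum fun v a => a * c (w + σ v) := by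
  rw [convL_apply]
  exact Finsupp.sum_mapDomain_index (fun a => by simp) (fun a b₁ b₂ => add_mul _ _ _)

lemma ann_pow {R : Type*} [CommRing R] (c : G → R) (h : AddMonoidAlgebra R G)
    (H : ∀ w, convL c w h = 0) (k : ℕ) (hk : 0 < k) : ∀ w, convL c w (h ^ k) = 0 := by
  intro w
  obtain ⟨j, rfl⟩ := Nat.exists_eq_succ_of_ne_zero hk.ne'
  rw [pow_succ, convL_mul]
  exact Finset.sum_eq_zero fun v _ => by dsimp only; rw [H, mul_zero]

lemma convL_cast {p : ℕ} [NeZero p] (c : G → ℤ) (w : G) (g : AddMonoidAlgebra ℤ G) :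
    ((convL c w g : ℤ) : ZMod p) =
      convL (fun x => ((c x : ℤ) : ZMod p)) w
        (AddMonoidAlgebra.ofCoeff (Finsupp.mapRange (Int.cast : ℤ → ZMod p) Int.cast_zero g.coeff)) := by
  rw [convL_apply, convL_apply]
  rw [Finsupp.sum_mapRange_index (fun v => by simp)]
  rw [Finsupp.sum, Finsupp.sum, Int.cast_sum]
  exact Finset.sum_congr rfl fun v _ => by push_cast; ring

/-- For a finitary integral configuration annihilated by nonzero `f`, there is `r`
such that `f(X^n)` annihilates `c` for all positive `n` coprime to `r`. -/
theorem stmt_5 (d : ℕ) (c : (Fin d → ℤ) → ℤ) (hc : (Set.range c).Finite)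
    (f : (Fin d → ℤ) →₀ ℤ) (hf : f ≠ 0)
    (hann : ∀ w : Fin d → ℤ, ∑ v ∈ f.support, f v * c (w + v) = 0) :
    ∃ r : ℕ, 0 < r ∧ ∀ n : ℕ, 0 < n → n.Coprime r →
      ∀ w : Fin d → ℤ, ∑ v ∈ f.support, f v * c (w + n • v) = 0 := by
  classical
  obtain ⟨C, hC⟩ : ∃ C : ℤ, ∀ x, |c x| ≤ C := by
    obtain ⟨C, hC⟩ := (hc.image (fun z => |z|)).bddAbove
    exact ⟨C, fun x => hC ⟨c x, ⟨x, rfl⟩, rfl⟩⟩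
  set S : ℤ := f.sum fun _ a => |a| with hS
  have hS0 : 0 ≤ S := Finset.sum_nonneg fun v _ => abs_nonneg _
  have hC0 : (0:ℤ) ≤ C := le_trans (abs_nonneg _) (hC (fun _ => 0))
  set K : ℤ := S * C with hK
  have hK0 : 0 ≤ K := mul_nonneg hS0 hC0
  set N : ℕ := K.toNat with hN
  set F : ℕ → AddMonoidAlgebra ℤ (Fin d → ℤ) := fun n =>
    AddMonoidAlgebra.ofCoeff (Finsupp.mapDomain (fun v => n • v) f) with hF
  have hFval : ∀ (n : ℕ) (w : Fin d → ℤ),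
      convL c w (F n) = ∑ v ∈ f.support, f v * c (w + n • v) := by
    intro n w
    rw [hF, convL_mapDomain]
    rfl
  have hbound : ∀ (n : ℕ) (w : Fin d → ℤ), |convL c w (F n)| ≤ K := by
    intro n w
    rw [hFval]
    calc |∑ v ∈ f.support, f v * c (w + n • v)|
        ≤ ∑ v ∈ f.support, |f v * c (w + n • v)| := Finset.abs_sum_le_sum_abs _ _
      _ ≤ ∑ v ∈ f.support, |f v| * C := Finset.sum_le_sum fun v _ => by
          rw [abs_mul]; exact mul_le_mul_of_nonneg_left (hC _) (abs_nonneg _)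
      _ = S * C := by rw [← Finset.sum_mul]; rfl
  have main : ∀ n : ℕ, (∀ q : ℕ, q.Prime → q ∣ n → ¬ q ∣ N.factorial) → 0 < n →
      ∀ w, convL c w (F n) = 0 := by
    intro n
    induction n using Nat.strong_induction_on with
    | _ n ih =>
      intro hq hn w
      by_cases hn1 : n = 1
      · subst hn1
        rw [hFval]
        simpa using hann w
      · have hp : n.minFac.Prime := Nat.minFac_prime hn1
        set p := n.minFac with hpdef
        set m := n / p with hm
        have hpn : p ∣ n := Nat.minFac_dvd n
        have hnm : n = p * m := (Nat.mul_div_cancel' hpn).symm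
        have hm0 : 0 < m := Nat.pos_of_ne_zero (by intro h; rw [h, mul_zero] at hnm; omega)
        have hmlt : m < n := by
          rw [hnm]; exact (Nat.lt_mul_iff_one_lt_left hm0).mpr hp.one_lt
        have hg : ∀ w', convL c w' (F m) = 0 :=
          ih m hmlt (fun q hq' hdvd => hq q hq' (hdvd.trans ⟨p, by rw [hnm]; ring⟩)) hm0
        have hpr : ¬ p ∣ N.factorial := hq p hp hpn
        have hpK : K < (p : ℤ) := by
          have hNp : N < p := by
            by_contra h
            push_neg at h
            exact hpr (Nat.dvd_factorial hp.pos h)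
          calc K ≤ (N : ℤ) := Int.self_le_toNat K
            _ < p := by exact_mod_cast hNp
        haveI : Fact p.Prime := ⟨hp⟩
        have hFn : AddMonoidAlgebra.ofCoeff (Finsupp.mapRange (Int.cast : ℤ → ZMod p) Int.cast_zero (F n).coeff)
            = AddMonoidAlgebra.mapDomain (fun v => p • v)
                (AddMonoidAlgebra.ofCoeff (Finsupp.mapRange (Int.cast : ℤ → ZMod p) Int.cast_zero (F m).coeff)) := by
          show AddMonoidAlgebra.ofCoeff _ = AddMonoidAlgebra.ofCoeff (Finsupp.mapDomain _ (Finsupp.mapRange (Int.cast : ℤ → ZMod p) Int.cast_zero (F m).coeff))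
          congr 1
          rw [Finsupp.mapDomain_mapRange _ _ _ _ (fun a b => Int.cast_add a b)]
          congr 1
          rw [hF]
          simp only [AddMonoidAlgebra.coeff_ofCoeff]
          rw [← Finsupp.mapDomain_comp]
          congr 1
          funext v
          show n • v = p • (m • v)
          rw [hnm, mul_smul]
        have hcast : ((convL c w (F n) : ℤ) : ZMod p) = 0 := by
          rw [convL_cast, hFn, ← frob]
          refine ann_pow _ _ (fun w' => ?_) p hp.pos w
          rw [← convL_cast, hg, Int.cast_zero]
        have hdvd : (p : ℤ) ∣ convL c w (F n) :=
          (ZMod.intCast_zmod_eq_zero_iff_dvd _ _).mp hcast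
        exact Int.eq_zero_of_abs_lt_dvd hdvd (lt_of_le_of_lt (hbound n w) hpK)
  refine ⟨N.factorial, N.factorial_pos, fun n hn hcop w => ?_⟩
  rw [← hFval]
  refine main n (fun q hq' hq1 hq2 => ?_) hn w
  exact Nat.Prime.one_lt hq' |>.ne' (Nat.eq_one_of_dvd_coprimes hcop hq1 hq2) |>.elim
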